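/- Let k and s be natural numbers with s ≥ 0, t > 0. The binomial coefficient C(k - 2^s(2^t - 1), 2^s) is odd if and only if k ≥ 2^{s+t} and 2^s does not appear in the binary expansion of k. (Here the binomial coefficient is taken to be 0 when k < 2^s(2^t-1).) -/

import Mathlib

lemma testBit_true_iff_aux (x s : ℕ) : x.testBit s = true ↔ 2^s ≤ x % 2^(s+1) := by
  have hp : (2:ℕ)^(s+1) = 2^s * 2 := by rw [pow_succ]
  have h2 : 0 < (2:ℕ)^s := Nat.pow_pos (by norm_num)
  have hlt : x % 2^(s+1) < 2^(s+1) := Nat.mod_lt _ (by omega)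
  rw [Nat.testBit_eq_decide_div_mod_eq, decide_eq_true_eq, ← Nat.mod_mul_right_div_self, ← hp]
  have h1 : 1 ≤ x % 2^(s+1) / 2^s ↔ 2^s ≤ x % 2^(s+1) := Nat.one_le_div_iff h2
  have h2' : x % 2^(s+1) / 2^s < 2 := Nat.div_lt_of_lt_mul (by omega)
  omega

lemma testBit_add_flip_aux (n m s : ℕ) (hm : m % 2^(s+1) = 2^s) :
    ((n + m).testBit s = true) ↔ (n.testBit s = false) := by
  have hp : (2:ℕ)^(s+1) = 2^s * 2 := by rw [pow_succ]
  have h2 : 0 < (2:ℕ)^s := Nat.pow_pos (by norm_num)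
  have hlt : n % 2^(s+1) < 2^(s+1) := Nat.mod_lt _ (by omega)
  have hlt2 : (n + m) % 2^(s+1) < 2^(s+1) := Nat.mod_lt _ (by omega)
  have key : (n + m) % 2^(s+1) = (n % 2^(s+1) + 2^s) % 2^(s+1) := by
    conv_lhs => rw [Nat.add_mod, hm]
  have h1 : (n + m) % 2^(s+1) = n % 2^(s+1) + 2^s ∨
      (n + m) % 2^(s+1) + 2^(s+1) = n % 2^(s+1) + 2^s := by
    rw [key]
    rcases Nat.lt_or_ge (n % 2^(s+1)) (2^s) with h | h
    · left; exact Nat.mod_eq_of_lt (by omega)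
    · right
      rw [Nat.mod_eq_sub_mod (by omega), Nat.mod_eq_of_lt (by omega)]
      omega
  rw [testBit_true_iff_aux, ← Bool.not_eq_true, testBit_true_iff_aux]
  omega

lemma odd_choose_two_pow_aux (s : ℕ) : ∀ n : ℕ,
    (Odd (n.choose (2^s)) ↔ n.testBit s = true) := by
  induction s with
  | zero =>
    intro n
    simp [Nat.choose_one_right, Nat.odd_iff, Nat.testBit_zero]
  | succ s ih =>
    intro n
    have h := @Choose.choose_modEq_choose_mod_mul_choose_div_nat n (2^(s+1)) 2 ⟨Nat.prime_two⟩
    have e1 : (2:ℕ)^(s+1) % 2 = 0 := by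
      rw [pow_succ]; exact Nat.mul_mod_left _ _
    have e2 : (2:ℕ)^(s+1) / 2 = 2^s := by
      rw [pow_succ]; exact Nat.mul_div_cancel _ (by norm_num)
    rw [e1, e2, Nat.choose_zero_right, one_mul] at h
    rw [Nat.ModEq] at h
    rw [Nat.odd_iff, h, ← Nat.odd_iff, ih (n / 2), Nat.testBit_add_one]

theorem stmt0 (k s t : ℕ) (ht : 0 < t) :
    Odd (Nat.choose (k - 2^s * (2^t - 1)) (2^s)) ↔
      (2^(s+t) ≤ k ∧ k.testBit s = false) := by
  have hs2t : (2:ℕ)^s ≤ 2^(s+t) := Nat.pow_le_pow_right (by norm_num) (by omega)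
  have hm : 2^s * (2^t - 1) = 2^(s+t) - 2^s := by
    rw [Nat.mul_sub, mul_one, ← pow_add]
  set m := 2^(s+t) - 2^s with hmdef
  have hp : (2:ℕ)^(s+1) = 2^s * 2 := by rw [pow_succ]
  have h2 : 0 < (2:ℕ)^s := Nat.pow_pos (by norm_num)
  have hmmod : m % 2^(s+1) = 2^s := by
    have hD : 1 ≤ (2:ℕ)^(t-1) := Nat.one_le_two_pow
    have hc : (2:ℕ)^(s+t) = 2^(s+1) * 2^(t-1) := by
      rw [← pow_add]; congr 1; omega
    have hsub : (2:ℕ)^(s+1) * (2^(t-1) - 1) = 2^(s+1) * 2^(t-1) - 2^(s+1) := by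
      rw [Nat.mul_sub, mul_one]
    have hge : (2:ℕ)^(s+1) ≤ 2^(s+1) * 2^(t-1) := Nat.le_mul_of_pos_right _ hD
    have hrw : m = 2^(s+1) * (2^(t-1) - 1) + 2^s := by
      rw [hmdef, hc, hsub]
      omega
    rw [hrw, Nat.mul_add_mod]
    exact Nat.mod_eq_of_lt (by omega)
  rw [hm, odd_choose_two_pow_aux]
  constructor
  · intro h
    have hge : 2^s ≤ (k - m) % 2^(s+1) := (testBit_true_iff_aux _ _).mp h
    have hge' : 2^s ≤ k - m := le_trans hge (Nat.mod_le _ _)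
    have hkm : m ≤ k := by omega
    have hk : k = (k - m) + m := by omega
    have hflip := testBit_add_flip_aux (k - m) m s hmmod
    rw [← hk] at hflip
    refine ⟨by omega, ?_⟩
    cases hb : k.testBit s
    · rfl
    · have hf := hflip.mp hb
      rw [h] at hf
      simp at hf
  · rintro ⟨hk, hb⟩
    have hkm : m ≤ k := by omega
    have hkeq : k = (k - m) + m := by omega
    have hflip := testBit_add_flip_aux (k - m) m s hmmod
    rw [← hkeq] at hflip
    cases hcase : (k - m).testBit s
    · have := hflip.mpr hcase
      rw [hb] at this
      simp at this
    · rfl
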